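/- Let h > 0 be a real number, N ≥ 1 a natural number, and p ≥ 1 a real number. Let u : ℕ → ℝ satisfy u_k ≥ 0 and u_k ≤ u_{k+1} for all k. If for every k with 0 ≤ k ≤ N−1 one has u_k^p·(u_{k+1} − u_k)/h ≥ (p/(N·h)^{p−1})·u_{k+2}^p·((k+2)·h)^{p−1}, then h·Σ_{k=0}^{N−1} u_k^{p+2} − (1/(N·h)^{p−1})·(h·Σ_{k=0}^{N−1} u_k)^{p+1} ≥ u_0^p·(u_0 − (p+1)·h^p/(N·h)^{p−1}) · h·Σ_{k=0}^{N−1} u_k. -/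

import Mathlib

open Real Finset

lemma rpow_diff_le (x y q : ℝ) (hy : 0 ≤ y) (hxy : y ≤ x) (hq : 1 ≤ q) :
    x ^ q - y ^ q ≤ q * x ^ (q - 1) * (x - y) := by
  have hx : 0 ≤ x := hy.trans hxy
  rcases hx.eq_or_lt with hx0 | hx0
  · have hy0 : y = 0 := le_antisymm (hxy.trans hx0.ge) hy
    subst hy0
    rw [← hx0]
    simp [Real.zero_rpow (by linarith : q ≠ 0)]
  · have hs : (-1:ℝ) ≤ y / x - 1 := by
      have : 0 ≤ y / x := div_nonneg hy hx0.le
      linarith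
    have hb := one_add_mul_self_le_rpow_one_add hs hq
    have h1 : (1 + (y / x - 1)) = y / x := by ring
    rw [h1, Real.div_rpow hy hx0.le] at hb
    have hxq : (0:ℝ) < x ^ q := Real.rpow_pos_of_pos hx0 q
    have h2 := mul_le_mul_of_nonneg_right hb hxq.le
    rw [div_mul_cancel₀ _ hxq.ne'] at h2
    have e : q - 1 + 1 = q := by ring
    have hxqe : x ^ q = x ^ (q - 1) * x := by
      nth_rewrite 1 [← e]; rw [Real.rpow_add_one hx0.ne']
    have hd : (y / x - 1) * x = y - x := by field_simp
    have h3 : x ^ q + q * x ^ (q-1) * (y - x) ≤ y ^ q := by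
      calc x ^ q + q * x ^ (q-1) * (y - x) = (1 + q * (y/x - 1)) * x ^ q := by
            rw [hxqe, ← hd]; ring
        _ ≤ y ^ q := h2
    linarith

lemma le_rpow_diff (x y q : ℝ) (hy : 0 < y) (hxy : y ≤ x) (hq : 1 ≤ q) :
    q * y ^ (q - 1) * (x - y) ≤ x ^ q - y ^ q := by
  have hs : (-1:ℝ) ≤ x / y - 1 := by
    have : 0 ≤ x / y := div_nonneg (hy.le.trans hxy) hy.le
    linarith
  have hb := one_add_mul_self_le_rpow_one_add hs hq
  have h1 : (1 + (x / y - 1)) = x / y := by ring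
  rw [h1, Real.div_rpow (hy.le.trans hxy) hy.le] at hb
  have hyq : (0:ℝ) < y ^ q := Real.rpow_pos_of_pos hy q
  have h2 := mul_le_mul_of_nonneg_right hb hyq.le
  rw [div_mul_cancel₀ _ hyq.ne'] at h2
  have e : q - 1 + 1 = q := by ring
  have hyqe : y ^ q = y ^ (q - 1) * y := by
    nth_rewrite 1 [← e]; rw [Real.rpow_add_one hy.ne']
  have hd : (x / y - 1) * y = x - y := by field_simp
  have h3 : y ^ q + q * y ^ (q-1) * (x - y) ≤ x ^ q := by
    calc y ^ q + q * y ^ (q-1) * (x - y) = (1 + q * (x/y - 1)) * y ^ q := by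
          rw [hyqe, ← hd]; ring
      _ ≤ x ^ q := h2
  linarith

theorem qi_time_scale_hZ_thm32
    (h : ℝ) (hh : 0 < h) (N : ℕ) (hN : 1 ≤ N) (p : ℝ) (hp : 1 ≤ p)
    (u : ℕ → ℝ)
    (hnonneg : ∀ k, 0 ≤ u k)
    (hmono : ∀ k, u k ≤ u (k + 1))
    (hyp : ∀ k, k ≤ N - 1 →
      (p / ((N : ℝ) * h) ^ (p - 1)) * u (k + 2) ^ p * (((k : ℝ) + 2) * h) ^ (p - 1) ≤
        u k ^ p * (u (k + 1) - u k) / h) :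
    h * ∑ k ∈ Finset.range N, u k ^ (p + 2) -
        (1 / ((N : ℝ) * h) ^ (p - 1)) * (h * ∑ k ∈ Finset.range N, u k) ^ (p + 1) ≥
      u 0 ^ p * (u 0 - (p + 1) * h ^ p / ((N : ℝ) * h) ^ (p - 1)) *
        (h * ∑ k ∈ Finset.range N, u k) := by
  have hum : Monotone u := monotone_nat_of_le_succ hmono
  have hNh : (0:ℝ) < (N : ℝ) * h := by
    have : (0:ℝ) < (N:ℝ) := by exact_mod_cast Nat.pos_of_ne_zero (by omega)
    positivity
  set X : ℝ := ((N : ℝ) * h) ^ (p - 1) with hX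
  have hX0 : 0 < X := Real.rpow_pos_of_pos hNh _
  set c : ℝ := 1 / X with hc
  have hc0 : 0 < c := by positivity
  set S : ℕ → ℝ := fun n => h * ∑ k ∈ Finset.range n, u k with hSdef
  have hSstep : ∀ n, S (n+1) = S n + h * u n := by
    intro n
    simp only [hSdef, Finset.sum_range_succ]
    ring
  have hSnonneg : ∀ n, 0 ≤ S n :=
    fun n => mul_nonneg hh.le (Finset.sum_nonneg fun k _ => hnonneg k)
  have hSmono : ∀ n, S n ≤ S (n+1) := by
    intro n
    rw [hSstep]
    nlinarith [hnonneg n, hh.le]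
  -- bound S (n+2) ≤ ((n+2)*h) * u (n+2)
  have hSb : ∀ n : ℕ, S (n+2) ≤ (((n:ℝ) + 2) * h) * u (n+2) := by
    intro n
    have hb : ∑ k ∈ Finset.range (n+2), u k ≤ (n+2) • u (n+2) := by
      apply Finset.sum_le_card_nsmul _ _ _ ?_ |>.trans
      · rw [Finset.card_range]
      · intro x hx
        exact hum (by simp at hx; omega)
    rw [nsmul_eq_mul] at hb
    have := mul_le_mul_of_nonneg_left hb hh.le
    simp only [hSdef]
    push_cast at this ⊢
    nlinarith
  -- auxiliary function φ
  set φ : ℕ → ℝ := fun n => u n ^ (p+1) - c * (p+1) * (S (n+1)) ^ p with hφdef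
  have hpc : p / X = p * c := by
    rw [hc]; ring
  have hφstep : ∀ n, n ≤ N - 1 → φ n ≤ φ (n+1) := by
    intro n hn
    -- (A) lower bound on u-difference
    have hA : (p+1) * u n ^ p * (u (n+1) - u n) ≤ u (n+1) ^ (p+1) - u n ^ (p+1) := by
      rcases (hnonneg n).eq_or_lt with h0 | h0
      · rw [← h0, Real.zero_rpow (by linarith : p ≠ 0),
          Real.zero_rpow (by linarith : p + 1 ≠ 0)]
        simpa using Real.rpow_nonneg (hnonneg (n+1)) (p+1)
      · have := le_rpow_diff (u (n+1)) (u n) (p+1) h0 (hmono n) (by linarith)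
        have e : p + 1 - 1 = p := by ring
        rw [e] at this
        linarith
    -- (B) upper bound on S^p-difference
    have hB : (S (n+2)) ^ p - (S (n+1)) ^ p ≤ p * (S (n+2)) ^ (p-1) * (h * u (n+1)) := by
      have := rpow_diff_le (S (n+2)) (S (n+1)) p (hSnonneg _) (hSmono _) hp
      rw [hSstep (n+1)] at this ⊢
      simpa using this
    -- (C) comparison of S^(p-1) with the hypothesis's term
    have hC : u (n+1) * (S (n+2)) ^ (p-1) ≤ u (n+2) ^ p * (((n:ℝ) + 2) * h) ^ (p-1) := by
      have hn2 : 0 ≤ (((n:ℝ) + 2) * h) := by positivity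
      have h1 : (S (n+2)) ^ (p-1) ≤ ((((n:ℝ) + 2) * h) * u (n+2)) ^ (p-1) :=
        Real.rpow_le_rpow (hSnonneg _) (hSb n) (by linarith)
      rw [Real.mul_rpow hn2 (hnonneg _)] at h1
      rcases (hnonneg (n+2)).eq_or_lt with h0 | h0
      · have hu1 : u (n+1) = 0 := le_antisymm (by rw [h0]; exact hmono (n+1)) (hnonneg _)
        rw [hu1, ← h0, Real.zero_rpow (by linarith : p ≠ 0)]
        simp
      · have h2 := mul_le_mul_of_nonneg_left h1 (hnonneg (n+1))
        have h3 : u (n+1) * ((((n:ℝ)+2)*h) ^ (p-1) * u (n+2) ^ (p-1)) ≤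
            u (n+2) * ((((n:ℝ)+2)*h) ^ (p-1) * u (n+2) ^ (p-1)) := by
          apply mul_le_mul_of_nonneg_right (hmono (n+1))
          positivity
        have e : p - 1 + 1 = p := by ring
        have h4 : u (n+2) ^ (p-1) * u (n+2) = u (n+2) ^ p := by
          rw [← Real.rpow_add_one h0.ne' (p-1), e]
        calc u (n+1) * (S (n+2)) ^ (p-1)
            ≤ u (n+1) * ((((n:ℝ)+2)*h) ^ (p-1) * u (n+2) ^ (p-1)) := h2
          _ ≤ u (n+2) * ((((n:ℝ)+2)*h) ^ (p-1) * u (n+2) ^ (p-1)) := h3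
          _ = u (n+2) ^ p * (((n:ℝ)+2)*h) ^ (p-1) := by rw [← h4]; ring
    -- (D) the hypothesis
    have hD : p * c * u (n + 2) ^ p * (((n : ℝ) + 2) * h) ^ (p - 1) * h ≤
        u n ^ p * (u (n + 1) - u n) := by
      have hd0 := hyp n hn
      rw [hpc] at hd0
      have hd1 := mul_le_mul_of_nonneg_right hd0 hh.le
      rw [div_mul_cancel₀ _ hh.ne'] at hd1
      exact hd1
    have hB' := mul_le_mul_of_nonneg_left hB
      (mul_nonneg hc0.le (by linarith : (0:ℝ) ≤ p + 1))
    have hp1 : (0:ℝ) ≤ p + 1 := by linarith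
    have hp0 : (0:ℝ) ≤ p := by linarith
    have hC' := mul_le_mul_of_nonneg_left hC
      (mul_nonneg (mul_nonneg (mul_nonneg hc0.le hp1) hp0) hh.le)
    have hD' := mul_le_mul_of_nonneg_left hD (by linarith : (0:ℝ) ≤ p + 1)
    simp only [hφdef]
    linarith [hA, hB', hC', hD']
  -- value at 0
  have hφ0 : φ 0 = u 0 ^ p * (u 0 - (p+1) * h ^ p * c) := by
    simp only [hφdef]
    have hS1 : S 1 = h * u 0 := by simp [hSdef]
    rw [hS1, Real.mul_rpow hh.le (hnonneg 0)]
    rcases (hnonneg 0).eq_or_lt with h0 | h0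
    · rw [← h0, Real.zero_rpow (by linarith : p ≠ 0),
        Real.zero_rpow (by linarith : p + 1 ≠ 0)]
      ring
    · have hu : u 0 ^ (p+1) = u 0 ^ p * u 0 := Real.rpow_add_one h0.ne' p
      rw [hu]; ring
  have hφA : ∀ n, n ≤ N - 1 → u 0 ^ p * (u 0 - (p+1)*h^p*c) ≤ φ n := by
    intro n
    induction n with
    | zero => intro _; rw [hφ0]
    | succ m ih =>
      intro hm
      have h1 : m ≤ N - 1 := by omega
      exact (ih h1).trans (hφstep m h1)
  set A : ℝ := u 0 ^ p * (u 0 - (p+1)*h^p*c) with hA0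
  have main : ∀ n, n ≤ N →
      0 ≤ h * ∑ k ∈ Finset.range n, u k ^ (p+2) - c * (S n)^(p+1) - A * S n := by
    intro n
    induction n with
    | zero =>
      intro _
      have hS0 : S 0 = 0 := by simp [hSdef]
      simp [hS0, Real.zero_rpow (by linarith : p + 1 ≠ 0)]
    | succ m ih =>
      intro hm
      have ih' := ih (by omega)
      have hstep := rpow_diff_le (S (m+1)) (S m) (p+1) (hSnonneg m) (hSmono m)
        (by linarith)
      have e : p + 1 - 1 = p := by ring
      rw [e] at hstep
      have hdiff : S (m+1) - S m = h * u m := by rw [hSstep]; ring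
      rw [hdiff] at hstep
      have hstep' := mul_le_mul_of_nonneg_left hstep hc0.le
      have hφm : A ≤ u m ^ (p+1) - c*(p+1)*(S (m+1))^p := hφA m (by omega)
      have hmul := mul_le_mul_of_nonneg_right hφm (mul_nonneg hh.le (hnonneg m))
      have hup : u m ^ (p+2) = u m ^ (p+1) * u m := by
        rcases (hnonneg m).eq_or_lt with h0 | h0
        · rw [← h0, Real.zero_rpow (by linarith : p + 2 ≠ 0),
            Real.zero_rpow (by linarith : p + 1 ≠ 0)]
          ring
        · have e2 : p + 1 + 1 = p + 2 := by ring
          rw [← e2, Real.rpow_add_one h0.ne']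
      rw [Finset.sum_range_succ, hup]
      have hSe : S (m+1) = S m + h * u m := hSstep m
      nth_rewrite 2 [hSe]
      linarith [ih', hstep', hmul, hup]
  have hfin := main N le_rfl
  have hSN : h * ∑ k ∈ Finset.range N, u k = S N := rfl
  have hgoal : (p+1) * h ^ p / X = (p+1)*h^p*c := by rw [hc]; ring
  rw [hA0] at hfin
  rw [hgoal, hSN]
  linarith [hfin]
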